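/- Let G₁, G₂ be groups with a common subgroup A, and let G = G₁ *_A G₂ be their amalgamated free product, with G₁ ≠ A and G₂ ≠ A. Suppose G acts on a set Ω containing disjoint nonempty subsets X₁, X₂, and subsets X₁^e ⊆ X₁, X₂^ē ⊆ X₂, such that: A·X₁^e ⊆ X₁^e and A·X₂^ē ⊆ X₂^ē; (G₁ \ A)·X₂ ⊆ X₁^e and (G₂ \ A)·X₁ ⊆ X₂^ē; the actions of A restricted to X₁^e and to X₂^ē are both faithful; and at least one of the inclusions (G₁ \ A)·X₂ ⊆ X₁ or (G₂ \ A)·X₁ ⊆ X₂ is proper. Then the action of G on Ω is faithful. -/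

import Mathlib

section PP

variable {H : Type*} [Group H] {ι : Type*} {G : ι → Type*} [∀ i, Group (G i)]

/-- An alternating word in the pushout with first syllable in `G i` and last in `G j`,
all syllables outside the image of the base group. -/
inductive PPChain (φ : ∀ i, H →* G i) : ι → ι → Monoid.PushoutI φ → Prop
  | single {i : ι} {g : G i} (hg : g ∉ Set.range (φ i)) :
      PPChain φ i i (Monoid.PushoutI.of (φ := φ) i g)
  | cons {i j k : ι} {g : G i} {w : Monoid.PushoutI φ} (hg : g ∉ Set.range (φ i))
      (hij : i ≠ j) (hw : PPChain φ j k w) :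
      PPChain φ i k (Monoid.PushoutI.of (φ := φ) i g * w)

variable {φ : ∀ i, H →* G i}

theorem ppchain_not_range_mul {i : ι} {g : G i} (h : H) (hg : g ∉ Set.range (φ i)) :
    g * φ i h ∉ Set.range (φ i) := by
  rintro ⟨a, ha⟩
  exact hg ⟨a * h⁻¹, by rw [map_mul, map_inv, ha]; group⟩

theorem ppchain_not_range_mul' {i : ι} {g : G i} (h : H) (hg : g ∉ Set.range (φ i)) :
    φ i h * g ∉ Set.range (φ i) := by
  rintro ⟨a, ha⟩
  exact hg ⟨h⁻¹ * a, by rw [map_mul, map_inv, ha]; group⟩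

theorem ppchain_not_range_inv {i : ι} {g : G i} (hg : g ∉ Set.range (φ i)) :
    g⁻¹ ∉ Set.range (φ i) := by
  rintro ⟨a, ha⟩
  exact hg ⟨a⁻¹, by rw [map_inv, ha, inv_inv]⟩

theorem PPChain.base_mul {i j : ι} {w : Monoid.PushoutI φ} (h : H)
    (hw : PPChain φ i j w) : PPChain φ i j (Monoid.PushoutI.base φ h * w) := by
  induction hw with
  | @single i g hg =>
      rw [← Monoid.PushoutI.of_apply_eq_base φ i h, ← map_mul]
      exact PPChain.single (ppchain_not_range_mul' h hg)
  | @cons i j k g w hg hij hw ih =>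
      rw [← mul_assoc, ← Monoid.PushoutI.of_apply_eq_base φ i h, ← map_mul]
      exact PPChain.cons (ppchain_not_range_mul' h hg) hij hw

theorem PPChain.snoc {i j k : ι} {w : Monoid.PushoutI φ} {g : G k}
    (hw : PPChain φ i j w) (hg : g ∉ Set.range (φ k)) (hjk : j ≠ k) :
    PPChain φ i k (w * Monoid.PushoutI.of (φ := φ) k g) := by
  induction hw with
  | @single i g' hg' => exact PPChain.cons hg' hjk (PPChain.single hg)
  | @cons i j' j g' w hg' hij hw ih =>
      rw [mul_assoc]
      exact PPChain.cons hg' hij (ih hjk)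

theorem PPChain.inv {i j : ι} {w : Monoid.PushoutI φ}
    (hw : PPChain φ i j w) : PPChain φ j i w⁻¹ := by
  induction hw with
  | @single i g hg =>
      rw [← map_inv]
      exact PPChain.single (ppchain_not_range_inv hg)
  | @cons i j k g w hg hij hw ih =>
      rw [mul_inv_rev, ← map_inv]
      exact ih.snoc (ppchain_not_range_inv hg) (Ne.symm hij)

theorem ppchain_decomp (hφ : ∀ i, Function.Injective (φ i)) (w : Monoid.PushoutI φ) :
    (∃ h, w = Monoid.PushoutI.base φ h) ∨ ∃ i j, PPChain φ i j w := by
  classical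
  rcases Monoid.PushoutI.NormalWord.transversal_nonempty φ hφ with ⟨d⟩
  have key : ∀ v : Monoid.PushoutI.NormalWord d,
      (∃ h, v.prod = Monoid.PushoutI.base φ h) ∨
        ∃ i j, v.fstIdx = some i ∧ PPChain φ i j v.prod := by
    intro v
    induction v using Monoid.PushoutI.NormalWord.consRecOn with
    | empty => exact Or.inl ⟨1, by simp⟩
    | cons i g v hmw hgn hgr hv1 ih =>
        right
        refine ⟨i, ?_⟩
        have hfst : (Monoid.PushoutI.NormalWord.cons g v hmw hgr).fstIdx = some i := by
          simp [Monoid.PushoutI.NormalWord.cons, Monoid.CoprodI.Word.fstIdx,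
            Monoid.CoprodI.Word.cons]
        have hgr' : g ∉ Set.range (φ i) := by
          simpa [MonoidHom.mem_range, Set.mem_range] using hgr
        rcases ih with ⟨h, hh⟩ | ⟨i', j, hfst', hchain⟩
        · refine ⟨i, hfst, ?_⟩
          rw [Monoid.PushoutI.NormalWord.prod_cons, hh,
            ← Monoid.PushoutI.of_apply_eq_base φ i h, ← map_mul]
          exact PPChain.single (ppchain_not_range_mul h hgr')
        · refine ⟨j, hfst, ?_⟩
          rw [Monoid.PushoutI.NormalWord.prod_cons]
          exact PPChain.cons hgr' (fun h => hmw (h ▸ hfst')) hchain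
    | base h v hv1 ih =>
        have hfst : (Monoid.PushoutI.base φ h • v).fstIdx = v.fstIdx := by
          rw [Monoid.PushoutI.NormalWord.base_smul_def]
        have hprod : (Monoid.PushoutI.base φ h • v).prod =
            Monoid.PushoutI.base φ h * v.prod := by
          rw [Monoid.PushoutI.NormalWord.prod_smul]
        rcases ih with ⟨h', hh'⟩ | ⟨i, j, hfst', hchain⟩
        · exact Or.inl ⟨h * h', by rw [hprod, hh', map_mul]⟩
        · exact Or.inr ⟨i, j, by rw [hfst, hfst'], by rw [hprod]; exact hchain.base_mul h⟩
  rcases key (w • Monoid.PushoutI.NormalWord.empty) with ⟨h, hh⟩ | ⟨i, j, _, hchain⟩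
  · left
    exact ⟨h, by rw [← hh, Monoid.PushoutI.NormalWord.prod_smul,
      Monoid.PushoutI.NormalWord.prod_empty, mul_one]⟩
  · right
    exact ⟨i, j, by
      rwa [Monoid.PushoutI.NormalWord.prod_smul,
        Monoid.PushoutI.NormalWord.prod_empty, mul_one] at hchain⟩

end PP


/-- **Ping-pong lemma for amalgamated products** (Maskit, VII.A.10).
Let `G = G₁ *_A G₂` (here realized as `Monoid.PushoutI φ` over the index type `Bool`,
with injective structure maps `φ i : A →* Gᵢ`, `Gᵢ ≠ A`) act on a set `Ω` containing
disjoint nonempty subsets `X i` and subsets `Xe i ⊆ X i` such that `A` preserves each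
`Xe i`, `(Gᵢ \ A)·X (¬i) ⊆ Xe i`, the restricted actions of `A` on the `Xe i` are
faithful, and at least one of the inclusions `(Gᵢ \ A)·X (¬i) ⊆ X i` is proper.
Then the action of `G` on `Ω` is faithful. -/
theorem pingPong_amalgamated {A : Type*} [Group A] (Gi : Bool → Type*)
    [∀ i, Group (Gi i)] (φ : ∀ i, A →* Gi i)
    (hφ : ∀ i, Function.Injective (φ i))
    (hne : ∀ i, Set.range (φ i) ≠ Set.univ)
    {Ω : Type*} [MulAction (Monoid.PushoutI φ) Ω]
    (X Xe : Bool → Set Ω)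
    (hnonempty : ∀ i, (X i).Nonempty)
    (hdisj : Disjoint (X true) (X false))
    (hXe : ∀ i, Xe i ⊆ X i)
    (hAinv : ∀ (i : Bool) (a : A), ∀ x ∈ Xe i,
      Monoid.PushoutI.of (φ := φ) i (φ i a) • x ∈ Xe i)
    (hpp : ∀ (i : Bool) (g : Gi i), g ∉ Set.range (φ i) → ∀ x ∈ X (!i),
      Monoid.PushoutI.of (φ := φ) i g • x ∈ Xe i)
    (hfaith : ∀ (i : Bool) (a : A),
      (∀ x ∈ Xe i, Monoid.PushoutI.of (φ := φ) i (φ i a) • x = x) → a = 1)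
    (hmiss : ∃ i, ∃ x ∈ X i, ∀ g : Gi i, g ∉ Set.range (φ i) → ∀ z ∈ X (!i),
      Monoid.PushoutI.of (φ := φ) i g • z ≠ x) :
    ∀ w : Monoid.PushoutI φ, (∀ x : Ω, w • x = x) → w = 1 := by
  -- disjointness in both directions
  have hdisj' : ∀ (i : Bool) (y : Ω), y ∈ X i → y ∈ X (!i) → False := by
    intro i
    cases i
    · exact fun y h1 h2 => Set.disjoint_left.mp hdisj h2 h1
    · exact fun y h1 h2 => Set.disjoint_left.mp hdisj h1 h2
  -- ping-pong for chains
  have hping : ∀ {i j : Bool} {v : Monoid.PushoutI φ}, PPChain φ i j v →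
      ∀ x ∈ X (!j), v • x ∈ Xe i := by
    intro i j v hv
    induction hv with
    | @single i g hg => exact fun x hx => hpp i g hg x hx
    | @cons i j k g w hg hij hw ih =>
        intro x hx
        have hji : (!i) = j := by rw [Bool.eq_not_of_ne hij, Bool.not_not]
        have : w • x ∈ Xe j := ih x hx
        rw [mul_smul]
        exact hpp i g hg (w • x) (hji ▸ hXe j this)
  obtain ⟨m, x, hxm, hm⟩ := hmiss
  -- mismatched chains starting at `m` give a contradiction
  have key : ∀ {j : Bool} {v : Monoid.PushoutI φ}, PPChain φ m j v → j ≠ m →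
      (∀ y : Ω, v • y = y) → False := by
    intro j v hv
    cases hv with
    | single hg => exact fun h _ => h rfl
    | @cons _ j' _ g w hg hij hw =>
        intro hjm htriv
        have hj' : j' = !m := Bool.eq_not_of_ne (fun h => hij h.symm)
        have hjj : (!j) = m := by rw [Bool.eq_not_of_ne hjm, Bool.not_not]
        have hwx : w • x ∈ X (!m) := by
          subst hj'
          exact hXe _ (hping hw x (hjj ▸ hxm))
        have := hm g hg (w • x) hwx
        rw [← mul_smul] at this
        exact this (htriv x)
  intro w hw
  rcases ppchain_decomp hφ w with ⟨h, rfl⟩ | ⟨i, j, hchain⟩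
  · -- base case: use faithfulness of `A` on `Xe true`
    have : h = 1 := by
      refine hfaith true h (fun y hy => ?_)
      rw [Monoid.PushoutI.of_apply_eq_base]
      exact hw y
    rw [this, map_one]
  · exfalso
    rcases eq_or_ne j i with rfl | hji
    · -- matched ends
      obtain ⟨y, hy⟩ := hnonempty (!j)
      have h1 : w • y ∈ X j := hXe j (hping hchain y hy)
      rw [hw y] at h1
      exact hdisj' j y h1 hy
    · -- mismatched ends
      have hj : j = !i := Bool.eq_not_of_ne hji
      subst hj
      rcases eq_or_ne i m with rfl | him
      · exact key hchain (by simp) hw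
      · have him' : i = !m := Bool.eq_not_of_ne him
        have hinv' : PPChain φ m (!m) w⁻¹ := by
          have := hchain.inv
          rwa [him', Bool.not_not] at this
        exact key hinv' (by simp)
          (fun y => by rw [inv_smul_eq_iff, hw y])
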